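/- Under the corner construction, let H be the orthogonal projection of q₂ onto the line through p_i and p_m. Then ‖q₁ − H‖ = r·sin α. (Key identity in the proof of Theorem 1, showing the constructed path length matches the optimal Dubins length of the straight segment.) -/

import Mathlib

set_option maxHeartbeats 1000000 in
/-- key identity in the proof of Theorem 1: under the corner construction, if
`H` is the orthogonal projection of `q₂` onto the line through `p_i` and `p_m` (the point of
that line minimizing the distance to `q₂`), then `‖q₁ − H‖ = r · sin α`. -/
theorem corner_projection_identity
    (p_i p_m p_f : EuclideanSpace ℝ (Fin 2))
    (hpi : p_i ≠ p_m) (hpf : p_f ≠ p_m)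
    (hncol : ¬ Collinear ℝ ({p_i, p_m, p_f} : Set (EuclideanSpace ℝ (Fin 2))))
    (α : ℝ) (hα : α = EuclideanGeometry.angle p_i p_m p_f)
    (hα0 : 0 < α) (hαπ : α < Real.pi)
    (r : ℝ) (hr : 0 < r)
    (u₁ u₂ : EuclideanSpace ℝ (Fin 2))
    (hu₁ : u₁ = ‖p_i - p_m‖⁻¹ • (p_i - p_m))
    (hu₂ : u₂ = ‖p_f - p_m‖⁻¹ • (p_f - p_m))
    (l d : ℝ) (hl : l = r / Real.tan (α / 2)) (hd : d = r / Real.sin (α / 2))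
    (b : EuclideanSpace ℝ (Fin 2)) (hb : b = ‖u₁ + u₂‖⁻¹ • (u₁ + u₂))
    (c : EuclideanSpace ℝ (Fin 2)) (hc : c = p_m + d • b)
    (q₁ q₂ : EuclideanSpace ℝ (Fin 2))
    (hq₁ : q₁ = p_m + l • u₁) (hq₂ : q₂ = p_m + l • u₂)
    (H : EuclideanSpace ℝ (Fin 2))
    (hH : H ∈ affineSpan ℝ ({p_i, p_m} : Set (EuclideanSpace ℝ (Fin 2))))
    (hHmin : ∀ x ∈ affineSpan ℝ ({p_i, p_m} : Set (EuclideanSpace ℝ (Fin 2))),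
      dist q₂ H ≤ dist q₂ x) :
    ‖q₁ - H‖ = r * Real.sin α := by
  set A := p_i - p_m with hA
  set B := p_f - p_m with hB
  have hA0 : A ≠ 0 := sub_ne_zero.mpr hpi
  have hB0 : B ≠ 0 := sub_ne_zero.mpr hpf
  have ha : ‖A‖ ≠ 0 := norm_ne_zero_iff.mpr hA0
  have hbn : ‖B‖ ≠ 0 := norm_ne_zero_iff.mpr hB0
  have hcos : Real.cos α = (inner ℝ A B : ℝ) / (‖A‖ * ‖B‖) := by
    rw [hα, EuclideanGeometry.angle, InnerProductGeometry.cos_angle]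
    simp [hA, hB, vsub_eq_sub]
  have hinner : (inner ℝ A B : ℝ) = Real.cos α * (‖A‖ * ‖B‖) := by
    rw [hcos]; field_simp
  have hinner' : (inner ℝ B A : ℝ) = Real.cos α * (‖A‖ * ‖B‖) := by
    rw [real_inner_comm]; exact hinner
  set H₀ : EuclideanSpace ℝ (Fin 2) := p_m + (l * Real.cos α) • u₁ with hH₀
  have hmem : H₀ ∈ affineSpan ℝ ({p_i, p_m} : Set (EuclideanSpace ℝ (Fin 2))) := by
    have h : H₀ = (l * Real.cos α * ‖A‖⁻¹) • (p_i -ᵥ p_m) +ᵥ p_m := by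
      simp only [hH₀, hu₁, vsub_eq_sub, vadd_eq_add, smul_smul, ← hA]
      rw [add_comm]
    rw [h]
    exact smul_vsub_rev_vadd_mem_affineSpan_pair _ _ _
  have horth : (inner ℝ (q₂ - H₀) A : ℝ) = 0 := by
    have hq : q₂ - H₀ = (l * ‖B‖⁻¹) • B - (l * Real.cos α * ‖A‖⁻¹) • A := by
      simp only [hq₂, hH₀, hu₂, hu₁, ← hA, ← hB, smul_smul]
      abel_nf
    rw [hq, inner_sub_left, real_inner_smul_left, real_inner_smul_left,
      real_inner_self_eq_norm_sq, hinner']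
    field_simp
    ring
  obtain ⟨t, ht⟩ : ∃ t : ℝ, t • A = H - H₀ := by
    have h1 : H -ᵥ H₀ ∈ (affineSpan ℝ ({p_i, p_m} : Set (EuclideanSpace ℝ (Fin 2)))).direction :=
      AffineSubspace.vsub_mem_direction hH hmem
    rw [direction_affineSpan, mem_vectorSpan_pair] at h1
    simpa [vsub_eq_sub, hA] using h1
  have hpyth : ‖q₂ - H‖ ^ 2 = ‖q₂ - H₀‖ ^ 2 + ‖H - H₀‖ ^ 2 := by
    have h : q₂ - H = (q₂ - H₀) - (H - H₀) := by abel
    rw [h, norm_sub_sq_real, ← ht, real_inner_smul_right, horth]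
    ring
  have hle : ‖q₂ - H‖ ≤ ‖q₂ - H₀‖ := by
    have := hHmin H₀ hmem
    rwa [dist_eq_norm, dist_eq_norm] at this
  have hHeq : H = H₀ := by
    have h2 : ‖H - H₀‖ ^ 2 ≤ 0 := by nlinarith [norm_nonneg (q₂ - H), norm_nonneg (q₂ - H₀)]
    have h3 : ‖H - H₀‖ = 0 :=
      le_antisymm (by nlinarith [norm_nonneg (H - H₀)]) (norm_nonneg _)
    exact sub_eq_zero.mp (norm_eq_zero.mp h3)
  -- compute the norm
  have hu1norm : ‖u₁‖ = 1 := by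
    rw [hu₁, norm_smul, norm_inv, norm_norm, inv_mul_cancel₀ ha]
  have hdiff : q₁ - H = (l * (1 - Real.cos α)) • u₁ := by
    rw [hHeq, hq₁, hH₀]
    rw [add_sub_add_left_eq_sub, ← sub_smul]
    ring_nf
  -- trig facts
  have hs2 : 0 < Real.sin (α / 2) := Real.sin_pos_of_pos_of_lt_pi (by linarith) (by linarith [Real.pi_pos])
  have hc2 : 0 < Real.cos (α / 2) := Real.cos_pos_of_mem_Ioo ⟨by linarith [Real.pi_pos], by linarith⟩
  have htan : Real.tan (α / 2) = Real.sin (α / 2) / Real.cos (α / 2) := Real.tan_eq_sin_div_cos _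
  have hsinα : Real.sin α = 2 * Real.sin (α / 2) * Real.cos (α / 2) := by
    have := Real.sin_two_mul (α / 2)
    rw [show 2 * (α / 2) = α by ring] at this
    linarith
  have hcosα : 1 - Real.cos α = 2 * Real.sin (α / 2) ^ 2 := by
    have h1 := Real.cos_two_mul (α / 2)
    have h2 := Real.sin_sq_add_cos_sq (α / 2)
    rw [show 2 * (α / 2) = α by ring] at h1
    nlinarith
  have hlval : l * (1 - Real.cos α) = r * Real.sin α := by
    rw [hl, htan, hcosα, hsinα]
    field_simp
  have hlnn : 0 ≤ l * (1 - Real.cos α) := by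
    rw [hlval]
    have : 0 ≤ Real.sin α := Real.sin_nonneg_of_nonneg_of_le_pi (le_of_lt hα0) (le_of_lt hαπ)
    positivity
  rw [hdiff, norm_smul, hu1norm, mul_one, Real.norm_eq_abs, abs_of_nonneg hlnn, hlval]
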